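/- Let g : ℝⁿ → ℝ be convex, μ > 0, p ≥ 1. Suppose λ* ≠ 0 is a global minimizer of φ(λ) = g(λ) + (μ/(1+1/p))·‖λ‖^{1+1/p}. Let (λᵏ)_{k≥0} be a sequence in ℝⁿ with ‖λ⁰‖ ≥ ‖λ*‖ such that for every k ≥ 0, λᵏ⁺¹ is a global minimizer of λ ↦ g(λ) + (μ/2)·‖λᵏ‖^{(1/p)−1}·‖λ‖². Then for every k ≥ 0: ‖λᵏ⁺¹‖ ≤ ‖λᵏ‖ and ‖λᵏ‖ ≥ ‖λ*‖. -/

import Mathlib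

open Real

/-- Weighted AM-GM consequence: `2 x^{1+e} ≤ (1+e) s^{e-1} x² + (1-e) s^{1+e}`. -/
lemma clean_ineq {e s x : ℝ} (he0 : 0 < e) (he1 : e ≤ 1) (hs : 0 < s) (hx : 0 ≤ x) :
    2 * x ^ (1 + e) ≤ (1 + e) * (s ^ (e - 1) * x ^ 2) + (1 - e) * s ^ (1 + e) := by
  have am := Real.geom_mean_le_arith_mean2_weighted
    (by linarith : (0:ℝ) ≤ (1+e)/2) (by linarith : (0:ℝ) ≤ (1-e)/2)
    (by positivity : (0:ℝ) ≤ x^2) (by positivity : (0:ℝ) ≤ s^2) (by ring)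
  have hx1 : ((x^2 : ℝ)) ^ ((1+e)/2) = x ^ (1 + e) := by
    rw [← Real.rpow_natCast x 2, ← Real.rpow_mul hx]
    norm_num
    congr 1
    ring
  have hs1 : ((s^2 : ℝ)) ^ ((1-e)/2) = s ^ (1 - e) := by
    rw [← Real.rpow_natCast s 2, ← Real.rpow_mul hs.le]
    norm_num
    congr 1
    ring
  rw [hx1, hs1] at am
  have hse : (0:ℝ) < s ^ (e - 1) := Real.rpow_pos_of_pos hs _
  have h2 := mul_le_mul_of_nonneg_left am (by positivity : (0:ℝ) ≤ 2 * s ^ (e-1))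
  have hc1 : s ^ (e-1) * s ^ (1-e) = 1 := by
    rw [← Real.rpow_add hs]; norm_num
  have hc2 : s ^ (e-1) * s ^ 2 = s ^ (1+e) := by
    rw [← Real.rpow_natCast s 2, ← Real.rpow_add hs]
    congr 1
    push_cast; ring
  calc 2 * x ^ (1+e) = 2 * s ^ (e-1) * (x ^ (1+e) * s ^ (1-e)) := by
        rw [show 2 * s ^ (e-1) * (x ^ (1+e) * s ^ (1-e))
            = 2 * x ^ (1+e) * (s ^ (e-1) * s ^ (1-e)) from by ring, hc1]; ring
    _ ≤ 2 * s ^ (e-1) * ((1+e)/2 * x^2 + (1-e)/2 * s^2) := h2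
    _ = (1+e) * (s ^ (e-1) * x^2) + (1-e) * (s ^ (e-1) * s^2) := by ring
    _ = (1+e) * (s ^ (e-1) * x^2) + (1-e) * s ^ (1+e) := by rw [hc2]

lemma norm_combo_sq {n : ℕ} (θ : ℝ) (x z : EuclideanSpace ℝ (Fin n)) :
    ‖(1-θ) • x + θ • z‖ ^ 2
      = (1-θ) * ‖x‖^2 + θ * ‖z‖^2 - θ*(1-θ)*‖z - x‖^2 := by
  have h1 : ∀ v : EuclideanSpace ℝ (Fin n), ‖v‖^2 = (inner ℝ v v : ℝ) :=
    fun v => (real_inner_self_eq_norm_sq v).symm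
  rw [h1, h1, h1, h1]
  simp only [inner_add_left, inner_add_right, inner_sub_left, inner_sub_right,
    real_inner_smul_left, real_inner_smul_right]
  rw [real_inner_comm z x]
  ring

lemma strong_min {n : ℕ} {g : EuclideanSpace ℝ (Fin n) → ℝ}
    (hg : ConvexOn ℝ Set.univ g) {c : ℝ} (hc : 0 < c)
    {x : EuclideanSpace ℝ (Fin n)}
    (hx : ∀ z, g x + c * ‖x‖ ^ 2 ≤ g z + c * ‖z‖ ^ 2)
    (z : EuclideanSpace ℝ (Fin n)) :
    g x + c * ‖x‖ ^ 2 + c * ‖z - x‖ ^ 2 ≤ g z + c * ‖z‖ ^ 2 := by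
  by_contra hcon
  push_neg at hcon
  have hC0 : 0 ≤ (g z + c*‖z‖^2) - (g x + c*‖x‖^2) := by linarith [hx z]
  have hCK : (g z + c*‖z‖^2) - (g x + c*‖x‖^2) < c * ‖z-x‖^2 := by linarith
  have hK : 0 < c * ‖z-x‖^2 := lt_of_le_of_lt hC0 hCK
  obtain ⟨θ, hθ0, hθ1, hθcD⟩ : ∃ θ:ℝ, 0 < θ ∧ θ < 1 ∧
      θ * (2*(c*‖z-x‖^2)) = c*‖z-x‖^2 - ((g z + c*‖z‖^2) - (g x + c*‖x‖^2)) :=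
    ⟨(c*‖z-x‖^2 - ((g z + c*‖z‖^2) - (g x + c*‖x‖^2))) / (2*(c*‖z-x‖^2)),
      div_pos (by linarith) (by linarith),
      by rw [div_lt_one (by linarith)]; linarith,
      div_mul_cancel₀ _ (by linarith)⟩
  have hconv := hg.2 (Set.mem_univ x) (Set.mem_univ z)
    (by linarith : (0:ℝ) ≤ 1 - θ) hθ0.le (by ring)
  simp only [smul_eq_mul] at hconv
  have hminm := hx ((1-θ) • x + θ • z)
  rw [norm_combo_sq] at hminm
  have h5 : θ * (c * (1-θ) * ‖z-x‖^2) ≤ θ * ((g z + c*‖z‖^2) - (g x + c*‖x‖^2)) := by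
    nlinarith [hminm, hconv]
  have h6 : c * (1-θ) * ‖z-x‖^2 ≤ (g z + c*‖z‖^2) - (g x + c*‖x‖^2) :=
    le_of_mul_le_mul_left h5 hθ0
  nlinarith [h6, hθcD, hCK, hK]

lemma arith_key {ct cs a s : ℝ} (hct : 0 < ct) (hcs : 0 < cs) (hcts : ct ≤ cs)
    (ha : 0 ≤ a) (hs : 0 < s)
    (hch : (ct + cs) * (a - s)^2 ≤ (cs - ct) * (a^2 - s^2)) :
    s ≤ a ∧ ct * a ≤ cs * s := by
  have hsa : s ≤ a := by
    by_contra hlt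
    push_neg at hlt
    nlinarith [hch, mul_pos (show (0:ℝ) < s - a by linarith) (show (0:ℝ) < s - a by linarith),
      mul_nonneg (mul_nonneg (sub_nonneg.2 hcts) (show (0:ℝ) ≤ s - a by linarith))
        (show (0:ℝ) ≤ s + a by linarith)]
  refine ⟨hsa, ?_⟩
  rcases eq_or_lt_of_le hsa with h | h
  · rw [← h]
    exact mul_le_mul_of_nonneg_right hcts hs.le
  · by_contra hgt
    push_neg at hgt
    nlinarith [hch, mul_pos (show (0:ℝ) < a - s by linarith)
      (show (0:ℝ) < ct * a - cs * s by linarith)]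

set_option maxHeartbeats 1000000 in
/-- For the fixed point iteration started with `‖λ⁰‖ ≥ ‖λ*‖`, the norms of the iterates
decrease monotonically and stay above `‖λ*‖`. -/
theorem fixed_point_iteration_norm_monotone_above
    (n : ℕ) (g : EuclideanSpace ℝ (Fin n) → ℝ)
    (hg : ConvexOn ℝ Set.univ g) (μ p : ℝ) (hμ : 0 < μ) (hp : 1 ≤ p)
    (lamstar : EuclideanSpace ℝ (Fin n)) (hstar0 : lamstar ≠ 0)
    (hstar : ∀ z : EuclideanSpace ℝ (Fin n),
      g lamstar + μ / (1 + 1 / p) * ‖lamstar‖ ^ (1 + 1 / p) ≤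
        g z + μ / (1 + 1 / p) * ‖z‖ ^ (1 + 1 / p))
    (lam : ℕ → EuclideanSpace ℝ (Fin n))
    (h0 : ‖lamstar‖ ≤ ‖lam 0‖)
    (hmin : ∀ k : ℕ, ∀ z : EuclideanSpace ℝ (Fin n),
      g (lam (k + 1)) + μ / 2 * ‖lam k‖ ^ (1 / p - 1) * ‖lam (k + 1)‖ ^ 2 ≤
        g z + μ / 2 * ‖lam k‖ ^ (1 / p - 1) * ‖z‖ ^ 2) :
    ∀ k : ℕ, ‖lam (k + 1)‖ ≤ ‖lam k‖ ∧ ‖lamstar‖ ≤ ‖lam k‖ := by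
  have hp0 : 0 < p := lt_of_lt_of_le one_pos hp
  have he0 : 0 < 1/p := by positivity
  have he1 : 1/p ≤ 1 := by rw [div_le_one hp0]; exact hp
  have hq : (0:ℝ) < 1 + 1/p := by linarith
  have hs : 0 < ‖lamstar‖ := norm_pos_iff.mpr hstar0
  -- Step 1 : lamstar is also a global minimizer of its own quadratic model
  have hstar2 : ∀ z, g lamstar + μ / 2 * ‖lamstar‖ ^ (1/p - 1) * ‖lamstar‖ ^ 2
      ≤ g z + μ / 2 * ‖lamstar‖ ^ (1/p - 1) * ‖z‖ ^ 2 := by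
    intro z
    have hcl := clean_ineq he0 he1 hs (norm_nonneg z)
    have hc2 : ‖lamstar‖ ^ ((1:ℝ)/p-1) * ‖lamstar‖^2 = ‖lamstar‖ ^ (1+1/p) := by
      rw [← Real.rpow_natCast ‖lamstar‖ 2, ← Real.rpow_add hs]
      congr 1; push_cast; ring
    have hcc : (1+1/p) * (μ/(1+1/p)) = μ := mul_div_cancel₀ μ (ne_of_gt hq)
    have e1 : ∀ A w : ℝ, (1+1/p) * (A + μ/(1+1/p) * w) = (1+1/p)*A + μ*w := by
      intro A w; rw [mul_add, ← mul_assoc, hcc]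
    have hst2 : (1+1/p) * g lamstar + μ * ‖lamstar‖^(1+1/p)
        ≤ (1+1/p) * g z + μ * ‖z‖^(1+1/p) := by
      have h := mul_le_mul_of_nonneg_left (hstar z) hq.le
      rwa [e1, e1] at h
    rw [show μ / 2 * ‖lamstar‖ ^ ((1:ℝ)/p - 1) * ‖lamstar‖ ^ 2
        = μ / 2 * ‖lamstar‖ ^ (1+1/p) from by rw [mul_assoc, hc2]]
    rw [← mul_le_mul_iff_right₀ (show (0:ℝ) < 2*(1+1/p) by linarith)]
    have hclμ := mul_le_mul_of_nonneg_left hcl hμ.le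
    ring_nf
    ring_nf at hst2 hclμ
    linarith [hst2, hclμ]
  -- the key step
  have key : ∀ k, ‖lamstar‖ ≤ ‖lam k‖ →
      ‖lam (k+1)‖ ≤ ‖lam k‖ ∧ ‖lamstar‖ ≤ ‖lam (k+1)‖ := by
    intro k hk
    have ht0 : 0 < ‖lam k‖ := lt_of_lt_of_le hs hk
    have ha0 : (0:ℝ) ≤ ‖lam (k+1)‖ := norm_nonneg _
    have hct0 : 0 < μ / 2 * ‖lam k‖ ^ ((1:ℝ)/p - 1) :=
      mul_pos (by linarith) (Real.rpow_pos_of_pos ht0 _)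
    have hcs0 : 0 < μ / 2 * ‖lamstar‖ ^ ((1:ℝ)/p - 1) :=
      mul_pos (by linarith) (Real.rpow_pos_of_pos hs _)
    have hcts : μ / 2 * ‖lam k‖ ^ ((1:ℝ)/p - 1) ≤ μ / 2 * ‖lamstar‖ ^ ((1:ℝ)/p - 1) :=
      mul_le_mul_of_nonneg_left
        (Real.rpow_le_rpow_of_nonpos hs hk (by linarith)) (by linarith)
    have h1 := strong_min hg hct0 (hmin k) lamstar
    have h2 := strong_min hg hcs0 hstar2 (lam (k+1))
    rw [norm_sub_rev (lam (k+1)) lamstar] at h2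
    have hsum : (μ/2 * ‖lam k‖ ^ ((1:ℝ)/p - 1) + μ/2 * ‖lamstar‖ ^ ((1:ℝ)/p - 1))
          * ‖lamstar - lam (k+1)‖^2
        ≤ (μ/2 * ‖lamstar‖ ^ ((1:ℝ)/p - 1) - μ/2 * ‖lam k‖ ^ ((1:ℝ)/p - 1))
          * (‖lam (k+1)‖^2 - ‖lamstar‖^2) := by
      nlinarith [h1, h2]
    have hDge : (‖lam (k+1)‖ - ‖lamstar‖)^2 ≤ ‖lamstar - lam (k+1)‖^2 := by
      have habs := abs_norm_sub_norm_le lamstar (lam (k+1))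
      calc (‖lam (k+1)‖ - ‖lamstar‖)^2 = |‖lamstar‖ - ‖lam (k+1)‖|^2 := by
            rw [sq_abs]; ring
        _ ≤ ‖lamstar - lam (k+1)‖^2 := by
            apply pow_le_pow_left₀ (abs_nonneg _) habs
    have hch : (μ/2 * ‖lam k‖ ^ ((1:ℝ)/p - 1) + μ/2 * ‖lamstar‖ ^ ((1:ℝ)/p - 1))
          * (‖lam (k+1)‖ - ‖lamstar‖)^2
        ≤ (μ/2 * ‖lamstar‖ ^ ((1:ℝ)/p - 1) - μ/2 * ‖lam k‖ ^ ((1:ℝ)/p - 1))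
          * (‖lam (k+1)‖^2 - ‖lamstar‖^2) :=
      le_trans (mul_le_mul_of_nonneg_left hDge (by linarith)) hsum
    obtain ⟨hsa, hkey⟩ := arith_key hct0 hcs0 hcts ha0 hs hch
    refine ⟨?_, hsa⟩
    -- upper bound from ct * a ≤ cs * s
    have h1' : ‖lam k‖ ^ ((1:ℝ)/p - 1) * ‖lam (k+1)‖
        ≤ ‖lamstar‖ ^ ((1:ℝ)/p - 1) * ‖lamstar‖ :=
      le_of_mul_le_mul_left
        (by rw [← mul_assoc, ← mul_assoc]; exact hkey)
        (show (0:ℝ) < μ/2 by linarith)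
    have h2' : ‖lamstar‖ ^ ((1:ℝ)/p - 1) * ‖lamstar‖ = ‖lamstar‖ ^ ((1:ℝ)/p) := by
      rw [Real.rpow_sub hs, Real.rpow_one, div_mul_cancel₀ _ (ne_of_gt hs)]
    have h3' : ‖lamstar‖ ^ ((1:ℝ)/p) ≤ ‖lam k‖ ^ ((1:ℝ)/p) :=
      Real.rpow_le_rpow hs.le hk he0.le
    have h4' : ‖lam k‖ ^ ((1:ℝ)/p) = ‖lam k‖ ^ ((1:ℝ)/p - 1) * ‖lam k‖ := by
      rw [Real.rpow_sub ht0, Real.rpow_one, div_mul_cancel₀ _ (ne_of_gt ht0)]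
    have h5' : (0:ℝ) < ‖lam k‖ ^ ((1:ℝ)/p - 1) := Real.rpow_pos_of_pos ht0 _
    have hfin : ‖lam k‖ ^ ((1:ℝ)/p - 1) * ‖lam (k+1)‖
        ≤ ‖lam k‖ ^ ((1:ℝ)/p - 1) * ‖lam k‖ := by
      rw [← h4']; exact le_trans h1' (h2' ▸ h3')
    exact le_of_mul_le_mul_left hfin h5'
  have inv : ∀ k, ‖lamstar‖ ≤ ‖lam k‖ := by
    intro k
    induction k with
    | zero => exact h0
    | succ k ih => exact (key k ih).2
  intro k
  exact ⟨(key k (inv k)).1, inv k⟩
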